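/- Let δ > 0 and let α_g : [0,∞) → (0,∞) be a (strictly positive) function. For symmetric real 3×3 matrices S and D, the following two conditions are equivalent: (i) |D| ≤ δ if and only if S = O, and whenever |D| > δ one has D = δ·S/|S| + α_g(|S|²)S; (ii) α_g(|S|²) S = ((|D| − δ)⁺/|D|) D, where the right-hand side is interpreted as O when D = O. -/

import Mathlib

/-- Frobenius norm of a real 3×3 matrix: `|A|² = tr(A²)` for symmetric `A`. -/
noncomputable def frobNorm (A : Matrix (Fin 3) (Fin 3) ℝ) : ℝ :=
  Real.sqrt (∑ i, ∑ j, (A i j) ^ 2)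

lemma frobNorm_nonneg (A : Matrix (Fin 3) (Fin 3) ℝ) : 0 ≤ frobNorm A :=
  Real.sqrt_nonneg _

lemma frobNorm_eq_zero (A : Matrix (Fin 3) (Fin 3) ℝ) : frobNorm A = 0 ↔ A = 0 := by
  unfold frobNorm
  rw [Real.sqrt_eq_zero (Finset.sum_nonneg fun i _ => Finset.sum_nonneg fun j _ => sq_nonneg (A i j))]
  constructor
  · intro h
    ext i j
    have h1 := (Finset.sum_eq_zero_iff_of_nonneg
      (fun i _ => Finset.sum_nonneg fun j _ => sq_nonneg (A i j))).mp h i (Finset.mem_univ i)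
    have h2 := (Finset.sum_eq_zero_iff_of_nonneg
      (fun j _ => sq_nonneg (A i j))).mp h1 j (Finset.mem_univ j)
    simpa using pow_eq_zero_iff (two_ne_zero) |>.mp h2
  · intro h; simp [h]

lemma frobNorm_smul (c : ℝ) (A : Matrix (Fin 3) (Fin 3) ℝ) :
    frobNorm (c • A) = |c| * frobNorm A := by
  unfold frobNorm
  rw [← Real.sqrt_sq_eq_abs, ← Real.sqrt_mul (sq_nonneg c)]
  congr 1
  simp [Matrix.smul_apply, mul_pow, Finset.mul_sum]

/-- Shear-rate-activated (activated Euler fluid) dichotomy is equivalent to a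
single explicit relation for the stress.  The right-hand side of (ii) is
automatically `O` when `D = O` since then the scalar factor multiplies the zero
matrix. -/
theorem statement7 (δ : ℝ) (hδ : 0 < δ) (αg : ℝ → ℝ) (hαg : ∀ t, 0 ≤ t → 0 < αg t)
    (S D : Matrix (Fin 3) (Fin 3) ℝ) (hSsym : S.IsSymm) (hDsym : D.IsSymm) :
    ((frobNorm D ≤ δ ↔ S = 0) ∧
      (δ < frobNorm D → D = (δ / frobNorm S) • S + (αg (frobNorm S ^ 2)) • S)) ↔
      (αg (frobNorm S ^ 2)) • S = (max (frobNorm D - δ) 0 / frobNorm D) • D := by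
  set a := αg (frobNorm S ^ 2) with ha
  have hapos : 0 < a := hαg _ (sq_nonneg _)
  constructor
  · rintro ⟨h1, h2⟩
    by_cases hD : frobNorm D ≤ δ
    · have hS : S = 0 := h1.mp hD
      simp [hS, max_eq_right (by linarith : frobNorm D - δ ≤ 0)]
    · push_neg at hD
      have hS : S ≠ 0 := fun h0 => (not_le.mpr hD) (h1.mpr h0)
      have hs : 0 < frobNorm S :=
        lt_of_le_of_ne (frobNorm_nonneg S) (fun h0 => hS ((frobNorm_eq_zero S).mp h0.symm))
      set s := frobNorm S with hsdef
      have hDeq : D = ((δ + a * s) / s) • S := by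
        rw [h2 hD, ← add_smul]
        congr 1
        field_simp
      have hnD : frobNorm D = δ + a * s := by
        rw [hDeq, frobNorm_smul, abs_of_pos (by positivity), div_mul_cancel₀]
        exact ne_of_gt hs
      rw [hnD, hDeq,
        show δ + a * s - δ = a * s by ring, max_eq_left (by positivity), smul_smul]
      have hsc : a * s / (δ + a * s) * ((δ + a * s) / s) = a := by
        have h1 : δ + a * s ≠ 0 := by positivity
        have h2 : s ≠ 0 := ne_of_gt hs
        field_simp
      rw [hsc]
  · intro h
    have key2 : S = 0 → frobNorm D ≤ δ := by
      intro hS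
      by_contra hd
      push_neg at hd
      rw [hS, smul_zero] at h
      have hDpos : 0 < frobNorm D := lt_trans hδ hd
      have hc : max (frobNorm D - δ) 0 / frobNorm D ≠ 0 := by
        rw [max_eq_left (by linarith)]
        exact ne_of_gt (div_pos (by linarith) hDpos)
      rcases smul_eq_zero.mp h.symm with h' | h'
      · exact hc h'
      · rw [h', (frobNorm_eq_zero (0 : Matrix (Fin 3) (Fin 3) ℝ)).mpr rfl] at hd
        linarith
    have key1 : frobNorm D ≤ δ → S = 0 := by
      intro hD
      rw [max_eq_right (by linarith), zero_div, zero_smul] at h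
      rcases smul_eq_zero.mp h with h' | h'
      · exact absurd h' (ne_of_gt hapos)
      · exact h'
    refine ⟨⟨key1, key2⟩, ?_⟩
    intro hd
    have hS : S ≠ 0 := fun h0 => absurd hd (not_lt.mpr (key2 h0))
    have hs : 0 < frobNorm S :=
      lt_of_le_of_ne (frobNorm_nonneg S) (fun h0 => hS ((frobNorm_eq_zero S).mp h0.symm))
    have hDpos : 0 < frobNorm D := lt_trans hδ hd
    rw [max_eq_left (by linarith)] at h
    have hnormeq : a * frobNorm S = frobNorm D - δ := by
      have hh := congrArg frobNorm h
      rw [frobNorm_smul, frobNorm_smul, abs_of_pos hapos,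
        abs_of_pos (div_pos (by linarith) hDpos),
        div_mul_cancel₀ _ (ne_of_gt hDpos)] at hh
      exact hh
    have hsub : frobNorm D - δ ≠ 0 := sub_ne_zero.mpr (ne_of_gt hd)
    have hDeq : D = (frobNorm D / (frobNorm D - δ) * a) • S := by
      rw [← smul_smul, h, smul_smul,
        show frobNorm D / (frobNorm D - δ) * ((frobNorm D - δ) / frobNorm D) = 1 by
          field_simp, one_smul]
    rw [hDeq, ← add_smul]
    have h1 : frobNorm D = δ + a * frobNorm S := by linarith
    rw [show frobNorm D / (frobNorm D - δ) * a = δ / frobNorm S + a by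
      rw [h1, show δ + a * frobNorm S - δ = a * frobNorm S by ring]
      field_simp]
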